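/- The distance-induced kernel associated with the energy distance recovers the energy distance as a squared MMD: for a semimetric ρ of negative type on X, base point z₀ ∈ X, and kernel k(x,y) = ½[ρ(x,z₀) + ρ(y,z₀) − ρ(x,y)], the squared MMD with kernel k satisfies MMD²(P,Q) = E ρ(X,Y) − ½ E ρ(X,X') − ½ E ρ(Y,Y') where X,X' ∼ P i.i.d. and Y,Y' ∼ Q i.i.d., for all probability measures P, Q with ∫ρ(z,z₀)dP(z), ∫ρ(z,z₀)dQ(z) < ∞. -/

import Mathlib

open MeasureTheory

/-- The distance-induced kernel of a semimetric `ρ` with base point `z₀` recovers the energy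
distance as a squared MMD. -/
theorem energy_distance_eq_mmd_sq {X : Type*} [MeasurableSpace X]
    (ρ : X → X → ℝ) (hρ_meas : Measurable fun p : X × X => ρ p.1 p.2)
    (hρ_nonneg : ∀ x y, 0 ≤ ρ x y)
    (hρ_self : ∀ x, ρ x x = 0)
    (hρ_symm : ∀ x y, ρ x y = ρ y x)
    (hρ_negtype : ∀ (n : ℕ), 2 ≤ n → ∀ (x : Fin n → X) (a : Fin n → ℝ),
      (∑ i, a i) = 0 → (∑ i, ∑ j, a i * a j * ρ (x i) (x j)) ≤ 0)
    (z₀ : X)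
    (k : X → X → ℝ)
    (hk : ∀ x y, k x y = (ρ x z₀ + ρ y z₀ - ρ x y) / 2)
    (P Q : Measure X) [IsProbabilityMeasure P] [IsProbabilityMeasure Q]
    (hPmom : Integrable (fun z => ρ z z₀) P)
    (hQmom : Integrable (fun z => ρ z z₀) Q) :
    (∫ p : X × X, k p.1 p.2 ∂(P.prod P)) + (∫ p : X × X, k p.1 p.2 ∂(Q.prod Q))
        - 2 * ∫ p : X × X, k p.1 p.2 ∂(P.prod Q)
      = (∫ p : X × X, ρ p.1 p.2 ∂(P.prod Q))
        - (1 / 2) * (∫ p : X × X, ρ p.1 p.2 ∂(P.prod P))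
        - (1 / 2) * (∫ p : X × X, ρ p.1 p.2 ∂(Q.prod Q)) := by
  -- ρ(x,y) ≤ 2 ρ(x,z₀) + 2 ρ(y,z₀), from negative type with points (x, y, z₀) and weights (1,1,-2)
  have hbound : ∀ x y : X, ρ x y ≤ 2 * ρ x z₀ + 2 * ρ y z₀ := by
    intro x y
    have h := hρ_negtype 3 (by norm_num) ![x, y, z₀] ![1, 1, -2] (by
      norm_num [Fin.sum_univ_three, Matrix.cons_val_two])
    simp only [Fin.sum_univ_three] at h
    simp [Matrix.cons_val_zero, Matrix.cons_val_one, hρ_self, hρ_symm x y, hρ_symm z₀ x,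
      hρ_symm z₀ y] at h
    nlinarith [h, hρ_symm x y]
  have hρz_meas : Measurable fun z : X => ρ z z₀ := by
    have : (fun z : X => ρ z z₀) = (fun p : X × X => ρ p.1 p.2) ∘ (fun z => (z, z₀)) := rfl
    rw [this]
    exact hρ_meas.comp (measurable_id.prodMk measurable_const)
  -- key computation for each pair of probability measures
  have key : ∀ (μ ν : Measure X), IsProbabilityMeasure μ → IsProbabilityMeasure ν →
      Integrable (fun z => ρ z z₀) μ → Integrable (fun z => ρ z z₀) ν →
      (∫ p : X × X, k p.1 p.2 ∂(μ.prod ν))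
        = ((∫ z, ρ z z₀ ∂μ) + (∫ z, ρ z z₀ ∂ν) - ∫ p : X × X, ρ p.1 p.2 ∂(μ.prod ν)) / 2 := by
    intro μ ν hμP hνP hμ hν
    haveI := hμP; haveI := hνP
    have hmpf : MeasurePreserving (Prod.fst : X × X → X) (μ.prod ν) μ :=
      ⟨measurable_fst, by simp⟩
    have hmps : MeasurePreserving (Prod.snd : X × X → X) (μ.prod ν) ν :=
      ⟨measurable_snd, by simp⟩
    have hif : Integrable (fun p : X × X => ρ p.1 z₀) (μ.prod ν) :=
      (hmpf.integrable_comp hμ.aestronglyMeasurable).mpr hμ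
    have his : Integrable (fun p : X × X => ρ p.2 z₀) (μ.prod ν) :=
      (hmps.integrable_comp hν.aestronglyMeasurable).mpr hν
    have hiρ : Integrable (fun p : X × X => ρ p.1 p.2) (μ.prod ν) := by
      refine Integrable.mono' ((hif.const_mul 2).add (his.const_mul 2))
        hρ_meas.aestronglyMeasurable ?_
      filter_upwards with p
      rw [Real.norm_of_nonneg (hρ_nonneg _ _)]
      exact hbound p.1 p.2
    have hIf : ∫ p : X × X, ρ p.1 z₀ ∂(μ.prod ν) = ∫ z, ρ z z₀ ∂μ := by
      have h := integral_map (μ := μ.prod ν) measurable_fst.aemeasurable (f := fun z => ρ z z₀)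
        (by rw [hmpf.map_eq]; exact hρz_meas.aestronglyMeasurable)
      rw [hmpf.map_eq] at h
      exact h.symm
    have hIs : ∫ p : X × X, ρ p.2 z₀ ∂(μ.prod ν) = ∫ z, ρ z z₀ ∂ν := by
      have h := integral_map (μ := μ.prod ν) measurable_snd.aemeasurable (f := fun z => ρ z z₀)
        (by rw [hmps.map_eq]; exact hρz_meas.aestronglyMeasurable)
      rw [hmps.map_eq] at h
      exact h.symm
    simp_rw [hk]
    have hadd : Integrable (fun p : X × X => ρ p.1 z₀ + ρ p.2 z₀) (μ.prod ν) := hif.add his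
    rw [integral_div, integral_sub hadd hiρ, integral_add hif his, hIf, hIs]
  rw [key P P inferInstance inferInstance hPmom hPmom,
    key Q Q inferInstance inferInstance hQmom hQmom,
    key P Q inferInstance inferInstance hPmom hQmom]
  ring
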